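/- Let M be a matroid on {x_1,...,x_n} and α ∈ ℕ^n with positive entries. Suppose (B_1, B_2) is obtained from a pair of bases (A_1, A_2) of M by a symmetric subset exchange, and let (A'_1, A'_2) and (B'_1, B'_2) be compatible pairs of bases of M^α with π(A'_i) = A_i and π(B'_i) = B_i. Then (B'_1, B'_2) is obtained from (A'_1, A'_2) by a symmetric subset exchange in M^α. -/

import Mathlib

open Finset

/-- A set family is the collection of bases of a matroid: nonempty antichain
satisfying the basis exchange property. -/
def IsMatroidBases {γ : Type*} [DecidableEq γ] (ℬ : Set (Finset γ)) : Prop :=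
  ℬ.Nonempty ∧
  (∀ B₁ ∈ ℬ, ∀ B₂ ∈ ℬ, B₁ ⊆ B₂ → B₁ = B₂) ∧
  (∀ B₁ ∈ ℬ, ∀ B₂ ∈ ℬ, ∀ x ∈ B₁ \ B₂, ∃ y ∈ B₂ \ B₁, insert y (B₁.erase x) ∈ ℬ)

/-- The expansion of a family of subsets of `Fin n` with respect to `α`:
a subset `S` of the expanded ground set `Σ i, Fin (α i)` belongs to the
expansion iff it contains at most one copy of each element and its projection
belongs to the family. -/
def expansion {n : ℕ} (α : Fin n → ℕ) (𝒜 : Set (Finset (Fin n))) :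
    Set (Finset (Σ i : Fin n, Fin (α i))) :=
  {S | S.image Sigma.fst ∈ 𝒜 ∧ S.card = (S.image Sigma.fst).card}

/-- `(B₁, B₂)` is obtained from `(A₁, A₂)` by a symmetric subset exchange in the
matroid with basis family `ℬ`. -/
def SymSubsetExch {γ : Type*} [DecidableEq γ] (ℬ : Set (Finset γ))
    (A₁ A₂ B₁ B₂ : Finset γ) : Prop :=
  ∃ U V : Finset γ, U ⊆ A₁ ∧ V ⊆ A₂ ∧
    B₁ = (A₁ \ U) ∪ V ∧ B₂ = (A₂ \ V) ∪ U ∧ B₁ ∈ ℬ ∧ B₂ ∈ ℬ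

/-- if `(B₁, B₂)` is obtained from `(A₁, A₂)` by a symmetric
subset exchange in `M`, and `(A'₁, A'₂)`, `(B'₁, B'₂)` are compatible pairs of
bases of `M^α` projecting to them, then `(B'₁, B'₂)` is obtained from
`(A'₁, A'₂)` by a symmetric subset exchange in `M^α`. -/
theorem stmt_17 {n : ℕ} (α : Fin n → ℕ) (hα : ∀ i, 0 < α i)
    (𝒜 : Set (Finset (Fin n))) (hM : IsMatroidBases 𝒜)
    (A₁ A₂ B₁ B₂ : Finset (Fin n))
    (hA1 : A₁ ∈ 𝒜) (hA2 : A₂ ∈ 𝒜)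
    (hex : SymSubsetExch 𝒜 A₁ A₂ B₁ B₂)
    (A'₁ A'₂ B'₁ B'₂ : Finset (Σ i : Fin n, Fin (α i)))
    (hA'1 : A'₁ ∈ expansion α 𝒜) (hA'2 : A'₂ ∈ expansion α 𝒜)
    (hB'1 : B'₁ ∈ expansion α 𝒜) (hB'2 : B'₂ ∈ expansion α 𝒜)
    (hpA1 : A'₁.image Sigma.fst = A₁) (hpA2 : A'₂.image Sigma.fst = A₂)
    (hpB1 : B'₁.image Sigma.fst = B₁) (hpB2 : B'₂.image Sigma.fst = B₂)
    (hcomp : A'₁ ∪ A'₂ = B'₁ ∪ B'₂) :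
    SymSubsetExch (expansion α 𝒜) A'₁ A'₂ B'₁ B'₂ := by
  obtain ⟨U₀, V₀, hU₀, hV₀, hB1eq, hB2eq, -, -⟩ := hex
  have injB1 : Set.InjOn Sigma.fst (B'₁ : Set (Σ i : Fin n, Fin (α i))) := Finset.card_image_iff.mp hB'1.2.symm
  have injB2 : Set.InjOn Sigma.fst (B'₂ : Set (Σ i : Fin n, Fin (α i))) := Finset.card_image_iff.mp hB'2.2.symm
  -- base-level fact: B₁ ∩ B₂ ⊆ A₁ ∩ A₂
  have hbase : ∀ i : Fin n, i ∈ B₁ → i ∈ B₂ → i ∈ A₁ ∧ i ∈ A₂ := by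
    intro i h1 h2
    rw [hB1eq] at h1; rw [hB2eq] at h2
    simp only [Finset.mem_union, Finset.mem_sdiff] at h1 h2
    constructor
    · rcases h1 with ⟨hi, -⟩ | hi
      · exact hi
      · rcases h2 with ⟨-, hnV⟩ | hi2
        · exact absurd hi hnV
        · exact hU₀ hi2
    · rcases h2 with ⟨hi, -⟩ | hi2
      · exact hi
      · rcases h1 with ⟨-, hnU⟩ | hi1
        · exact absurd hi2 hnU
        · exact hV₀ hi1
  -- key lemma: B'₁ ∩ B'₂ ⊆ A'₁ ∩ A'₂
  have key : ∀ x ∈ B'₁, x ∈ B'₂ → x ∈ A'₁ ∧ x ∈ A'₂ := by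
    intro x hx1 hx2
    have hi1 : x.1 ∈ B₁ := by rw [← hpB1]; exact Finset.mem_image_of_mem _ hx1
    have hi2 : x.1 ∈ B₂ := by rw [← hpB2]; exact Finset.mem_image_of_mem _ hx2
    obtain ⟨hiA1, hiA2⟩ := hbase x.1 hi1 hi2
    constructor
    · rw [← hpA1] at hiA1
      obtain ⟨a, ha, hai⟩ := Finset.mem_image.mp hiA1
      have haS : a ∈ B'₁ ∪ B'₂ := by rw [← hcomp]; exact Finset.mem_union_left _ ha
      rcases Finset.mem_union.mp haS with h | h
      · rwa [injB1 h hx1 hai] at ha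
      · rwa [injB2 h hx2 hai] at ha
    · rw [← hpA2] at hiA2
      obtain ⟨a, ha, hai⟩ := Finset.mem_image.mp hiA2
      have haS : a ∈ B'₁ ∪ B'₂ := by rw [← hcomp]; exact Finset.mem_union_right _ ha
      rcases Finset.mem_union.mp haS with h | h
      · rwa [injB1 h hx1 hai] at ha
      · rwa [injB2 h hx2 hai] at ha
  refine ⟨A'₁ ∩ B'₂, A'₂ ∩ B'₁, Finset.inter_subset_left, Finset.inter_subset_left,
    ?_, ?_, hB'1, hB'2⟩
  · ext x
    simp only [Finset.mem_union, Finset.mem_sdiff, Finset.mem_inter]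
    constructor
    · intro hx
      by_cases h2 : x ∈ A'₂
      · exact Or.inr ⟨h2, hx⟩
      · have hxS : x ∈ A'₁ ∪ A'₂ := by rw [hcomp]; exact Finset.mem_union_left _ hx
        rcases Finset.mem_union.mp hxS with h1 | h1
        · exact Or.inl ⟨h1, fun hb => h2 (key x hx hb.2).2⟩
        · exact absurd h1 h2
    · rintro (⟨h1, hn⟩ | ⟨-, hb⟩)
      · have hxS : x ∈ B'₁ ∪ B'₂ := by rw [← hcomp]; exact Finset.mem_union_left _ h1
        rcases Finset.mem_union.mp hxS with h | h
        · exact h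
        · exact absurd ⟨h1, h⟩ hn
      · exact hb
  · ext x
    simp only [Finset.mem_union, Finset.mem_sdiff, Finset.mem_inter]
    constructor
    · intro hx
      by_cases h1 : x ∈ A'₁
      · exact Or.inr ⟨h1, hx⟩
      · have hxS : x ∈ A'₁ ∪ A'₂ := by rw [hcomp]; exact Finset.mem_union_right _ hx
        rcases Finset.mem_union.mp hxS with h2 | h2
        · exact absurd h2 h1
        · exact Or.inl ⟨h2, fun hb => h1 (key x hb.2 hx).1⟩
    · rintro (⟨h2, hn⟩ | ⟨-, hb⟩)
      · have hxS : x ∈ B'₁ ∪ B'₂ := by rw [← hcomp]; exact Finset.mem_union_right _ h2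
        rcases Finset.mem_union.mp hxS with h | h
        · exact absurd ⟨h2, h⟩ hn
        · exact h
      · exact hb
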